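/- Let N be a positive integer. For each prime p dividing N, let p^{n(p)} be the exact power of p dividing N, let f_p be the multiplicative order of the image of p in the group (ℤ/(N/p^{n(p)})ℤ)ˣ/±1, and let e_p = |(ℤ/(N/p^{n(p)})ℤ)ˣ/±1| / f_p. Then ∏_χ ∏_{p | N} (1 − p²·χ_f(p)) / (1 − p·χ_f(p)) = ∏_{p | N} (1 + p^{f_p})^{e_p} / (1 + p), where the outer product on the left ranges over all even non-principal Dirichlet characters χ modulo N and χ_f denotes the primitive character inducing χ. (This is the identity by which Yu's class number formula h₁^∞(N) = ∏_{p|N} p^{L(p)} ∏_{χ ≠ χ₀ even} (1/4)B_{2,χ_f}∏_{p|N}(1 − p²χ_f(p)) is rewritten as h₁^∞(N) = ∏_{p|N} p^{L(p)}(1+p^{f_p})^{e_p}/(1+p) · ∏_{χ ≠ χ₀ even} (1/4)B_{2,χ}.) -/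

import Mathlib

open scoped Classical

/-- The group `(ℤ/Mℤ)ˣ/±1`. -/
abbrev unitsModPM (M : ℕ) : Type :=
  (ZMod M)ˣ ⧸ Subgroup.zpowers (-1 : (ZMod M)ˣ)

/-- `fP M p` is the multiplicative order of the image of `p` in `(ℤ/Mℤ)ˣ/±1`
(junk value `0` if `p` is not coprime to `M`). -/
noncomputable def fP (M p : ℕ) : ℕ :=
  if h : Nat.Coprime p M then
    orderOf (QuotientGroup.mk (ZMod.unitOfCoprime p h) : unitsModPM M)
  else 0

/-- `eP M p = |(ℤ/Mℤ)ˣ/±1| / fP M p`. -/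
noncomputable def eP (M p : ℕ) : ℕ := Nat.card (unitsModPM M) / fP M p

section aux

lemma prod_nthRoots_one_sub_mul (f : ℕ) (hf : 0 < f) (x : ℂ) (hx : x ≠ 0) :
    ∏ z ∈ Polynomial.nthRootsFinset f (1 : ℂ), (1 - x * z) = 1 - x ^ f := by
  have prim := Complex.isPrimitiveRoot_exp f hf.ne'
  have hP := congrArg (Polynomial.eval x⁻¹) (Polynomial.X_pow_sub_one_eq_prod hf prim)
  simp only [Polynomial.eval_sub, Polynomial.eval_pow, Polynomial.eval_X, Polynomial.eval_one,
    Polynomial.eval_prod, Polynomial.eval_C] at hP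
  have hcard := prim.card_nthRootsFinset
  calc ∏ z ∈ Polynomial.nthRootsFinset f (1 : ℂ), (1 - x * z)
      = ∏ z ∈ Polynomial.nthRootsFinset f (1 : ℂ), (x * (x⁻¹ - z)) := by
        refine Finset.prod_congr rfl fun z _ => ?_
        field_simp
    _ = x ^ f * (x⁻¹ ^ f - 1) := by
        rw [Finset.prod_mul_distrib, Finset.prod_const, hcard, ← hP]
    _ = 1 - x ^ f := by
        rw [mul_sub, ← mul_pow, mul_inv_cancel₀ hx, one_pow, mul_one]

lemma prod_one_sub_mul_monoidHom (G : Type*) [CommGroup G] [Fintype G]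
    [Fintype (G →* ℂˣ)] (g : G) (x : ℂ) (hx : x ≠ 0) :
    ∏ φ : G →* ℂˣ, (1 - x * ((φ g : ℂˣ) : ℂ)) =
      (1 - x ^ orderOf g) ^ (Fintype.card G / orderOf g) := by
  haveI : NeZero (Monoid.exponent G) := ⟨Monoid.exponent_ne_zero_of_finite⟩
  set f := orderOf g with hfdef
  have hf : 0 < f := orderOf_pos g
  set ev : (G →* ℂˣ) →* ℂˣ :=
    { toFun := fun φ => φ g, map_one' := rfl, map_mul' := fun φ ψ => rfl } with hev
  have key1 : ∀ φ : G →* ℂˣ, (φ g) ^ f = 1 := fun φ => by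
    rw [← map_pow, pow_orderOf_eq_one, map_one]
  set E := MonoidHom.range ev with hE
  haveI : Finite E := Set.Finite.to_subtype (Set.finite_range ev)
  set T : Finset ℂˣ := Finset.univ.image ev with hT
  have memT : ∀ ζ ∈ T, ∃ φ : G →* ℂˣ, φ g = ζ := by
    intro ζ hζ
    simp only [hT, Finset.mem_image, Finset.mem_univ, true_and] at hζ
    exact hζ
  have hcardTE : T.card = Nat.card E := by
    rw [Nat.card_eq_fintype_card]
    refine (Finset.card_bij (fun ζ hζ => ⟨ζ, by
      obtain ⟨φ, hφ⟩ := memT ζ hζ; exact ⟨φ, hφ⟩⟩) (fun _ _ => Finset.mem_univ _)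
      (fun _ _ _ _ h => by simpa using congrArg Subtype.val h) ?_)
    rintro ⟨ζ, φ, hφ⟩ -
    exact ⟨ζ, by simp [hT, ← hφ, hev], by simp⟩
  have hcardE : Nat.card E = f := by
    have hdvd1 : Nat.card E ∣ f := by
      rw [← IsCyclic.exponent_eq_card]
      refine Monoid.exponent_dvd_of_forall_pow_eq_one fun ζ => ?_
      obtain ⟨φ, hφ⟩ := ζ.2
      have hz : (ζ : ℂˣ) ^ f = 1 := by rw [← hφ]; simpa [hev] using key1 φ
      ext
      exact_mod_cast hz
    have hdvd2 : f ∣ Nat.card E := by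
      refine orderOf_dvd_of_pow_eq_one ?_
      by_contra hgd
      obtain ⟨φ, hφ⟩ := CommGroup.exists_apply_ne_one_of_hasEnoughRootsOfUnity G ℂ hgd
      apply hφ
      rw [map_pow]
      have h2 : (⟨φ g, ⟨φ, rfl⟩⟩ : E) ^ (Nat.card E) = 1 := pow_card_eq_one'
      have h3 := congrArg Subtype.val h2
      simp only [SubmonoidClass.coe_pow, OneMemClass.coe_one] at h3
      exact h3
    exact Nat.dvd_antisymm hdvd1 hdvd2
  have hcardT : T.card = f := hcardTE.trans hcardE
  set K := (Finset.univ.filter (fun φ : G →* ℂˣ => ev φ = 1)).card with hK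
  have hfiber : ∀ ζ ∈ T, (Finset.univ.filter (fun φ : G →* ℂˣ => ev φ = ζ)).card = K := by
    intro ζ hζ
    obtain ⟨φ₀, hφ₀⟩ := memT ζ hζ
    rw [hK]
    refine Finset.card_bij' (fun ψ _ => φ₀⁻¹ * ψ) (fun k _ => φ₀ * k) ?_ ?_ ?_ ?_
    · intro ψ hψ
      simp only [Finset.mem_filter, Finset.mem_univ, true_and] at hψ ⊢
      have hψ' : ψ g = ζ := hψ
      show (φ₀⁻¹ * ψ) g = 1
      rw [MonoidHom.mul_apply, MonoidHom.inv_apply, hφ₀, hψ', inv_mul_cancel]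
    · intro k hk
      simp only [Finset.mem_filter, Finset.mem_univ, true_and] at hk ⊢
      have hk' : k g = 1 := hk
      show (φ₀ * k) g = ζ
      rw [MonoidHom.mul_apply, hφ₀, hk', mul_one]
    · intro ψ _; exact mul_inv_cancel_left φ₀ ψ
    · intro k _; exact inv_mul_cancel_left φ₀ k
  have hcount : Fintype.card (G →* ℂˣ) = f * K := by
    have := Finset.card_eq_sum_card_image ev (Finset.univ : Finset (G →* ℂˣ))
    rw [Finset.card_univ] at this
    rw [this, ← hT, Finset.sum_congr rfl hfiber, Finset.sum_const, hcardT, smul_eq_mul]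
  have hcardhom : Fintype.card (G →* ℂˣ) = Fintype.card G := by
    rw [← Nat.card_eq_fintype_card, ← Nat.card_eq_fintype_card]
    exact Nat.card_congr (CommGroup.monoidHom_mulEquiv_of_hasEnoughRootsOfUnity G ℂ).some.toEquiv
  have hKval : K = Fintype.card G / f := by
    rw [← hcardhom, hcount, Nat.mul_div_cancel_left _ hf]
  have hprodT : ∏ ζ ∈ T, (1 - x * (ζ : ℂ)) = 1 - x ^ f := by
    have hTimg : T.image (Units.val) = Polynomial.nthRootsFinset f (1 : ℂ) := by
      refine Finset.eq_of_subset_of_card_le ?_ ?_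
      · intro z hz
        simp only [Finset.mem_image] at hz
        obtain ⟨ζ, hζT, rfl⟩ := hz
        obtain ⟨φ, hφ⟩ := memT ζ hζT
        rw [Polynomial.mem_nthRootsFinset hf, ← hφ, ← Units.val_pow_eq_pow_val, key1 φ,
          Units.val_one]
      · rw [(Complex.isPrimitiveRoot_exp f hf.ne').card_nthRootsFinset,
          Finset.card_image_of_injective _ Units.val_injective, hcardT]
    have himg : ∏ z ∈ T.image Units.val, (1 - x * z) = ∏ ζ ∈ T, (1 - x * (ζ : ℂ)) :=
      Finset.prod_image (fun a _ b _ h => Units.ext h)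
    rw [← himg, hTimg]
    exact prod_nthRoots_one_sub_mul f hf x hx
  calc ∏ φ : G →* ℂˣ, (1 - x * ((φ g : ℂˣ) : ℂ))
      = ∏ ζ ∈ T, (1 - x * (ζ : ℂ)) ^ (Finset.univ.filter (fun φ => ev φ = ζ)).card := by
        exact Finset.prod_comp (fun ζ : ℂˣ => 1 - x * (ζ : ℂ)) ev
    _ = ∏ ζ ∈ T, (1 - x * (ζ : ℂ)) ^ K := Finset.prod_congr rfl fun ζ hζ => by rw [hfiber ζ hζ]
    _ = (∏ ζ ∈ T, (1 - x * (ζ : ℂ))) ^ K := by rw [← Finset.prod_pow]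
    _ = (1 - x ^ f) ^ (Fintype.card G / f) := by rw [hprodT, hKval]

lemma prod_even_chars (M : ℕ) [NeZero M] [Fintype (DirichletCharacter ℂ M)]
    [Fintype (unitsModPM M →* ℂˣ)] (p : ℕ) (h : Nat.Coprime p M) (F : ℂ → ℂ) :
    ∏ χ ∈ Finset.univ.filter (fun χ : DirichletCharacter ℂ M => χ (-1) = 1),
      F (χ (p : ZMod M)) =
    ∏ φ : unitsModPM M →* ℂˣ,
      F ((φ (QuotientGroup.mk (ZMod.unitOfCoprime p h)) : ℂˣ) : ℂ) := by
  refine (Finset.prod_bij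
    (fun (φ : unitsModPM M →* ℂˣ) (_ : φ ∈ Finset.univ) =>
      (MulChar.ofUnitHom (φ.comp (QuotientGroup.mk' _)) : DirichletCharacter ℂ M))
    ?_ ?_ ?_ ?_).symm
  · intro φ _
    simp only [Finset.mem_filter, Finset.mem_univ, true_and]
    have hval : ((-1 : (ZMod M)ˣ) : ZMod M) = (-1 : ZMod M) := by
      rw [Units.val_neg, Units.val_one]
    rw [← hval, MulChar.ofUnitHom_coe, MonoidHom.comp_apply]
    have : (QuotientGroup.mk' (Subgroup.zpowers (-1 : (ZMod M)ˣ))) (-1) = 1 :=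
      (QuotientGroup.eq_one_iff _).mpr (Subgroup.mem_zpowers _)
    rw [this, map_one, Units.val_one]
  · intro φ₁ _ φ₂ _ hEq
    have h2 : φ₁.comp (QuotientGroup.mk' _) = φ₂.comp (QuotientGroup.mk' _) :=
      MulChar.equivToUnitHom.symm.injective (by
        simpa only [MulChar.ofUnitHom_eq] using hEq)
    ext q
    exact congrArg Units.val (DFunLike.congr_fun h2 q)
  · intro χ hχ
    simp only [Finset.mem_filter, Finset.mem_univ, true_and] at hχ
    have hker : Subgroup.zpowers (-1 : (ZMod M)ˣ) ≤ χ.toUnitHom.ker := by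
      rw [Subgroup.zpowers_le, MonoidHom.mem_ker]
      exact DirichletCharacter.Even.toUnitHom_eval_neg_one χ hχ
    refine ⟨QuotientGroup.lift _ χ.toUnitHom hker, Finset.mem_univ _, ?_⟩
    have hcomp : (QuotientGroup.lift _ χ.toUnitHom hker).comp
        (QuotientGroup.mk' (Subgroup.zpowers (-1 : (ZMod M)ˣ))) = χ.toUnitHom := by
      ext u
      rfl
    show (MulChar.ofUnitHom ((QuotientGroup.lift _ χ.toUnitHom hker).comp
      (QuotientGroup.mk' _)) : DirichletCharacter ℂ M) = χ
    rw [hcomp, MulChar.ofUnitHom_eq]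
    exact MulChar.equivToUnitHom.symm_apply_apply χ
  · intro φ _
    rw [← ZMod.coe_unitOfCoprime p h, MulChar.ofUnitHom_coe, MonoidHom.comp_apply]
    rfl

lemma factorsThrough_gcd {N : ℕ} [NeZero N] (χ : DirichletCharacter ℂ N)
    {d₁ d₂ : ℕ} (h₁ : χ.FactorsThrough d₁) (h₂ : χ.FactorsThrough d₂) :
    χ.FactorsThrough (Nat.gcd d₁ d₂) := by
  have hd₁N : d₁ ∣ N := h₁.dvd
  have hd₂N : d₂ ∣ N := h₂.dvd
  haveI : NeZero d₁ := ⟨fun h => (NeZero.ne N) (Nat.eq_zero_of_zero_dvd (h ▸ hd₁N))⟩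
  haveI : NeZero d₂ := ⟨fun h => (NeZero.ne N) (Nat.eq_zero_of_zero_dvd (h ▸ hd₂N))⟩
  have hgN : Nat.gcd d₁ d₂ ∣ N := (Nat.gcd_dvd_left _ _).trans hd₁N
  rw [DirichletCharacter.factorsThrough_iff_ker_unitsMap hd₁N] at h₁
  rw [DirichletCharacter.factorsThrough_iff_ker_unitsMap hd₂N] at h₂
  rw [DirichletCharacter.factorsThrough_iff_ker_unitsMap hgN]
  intro x hx
  rw [MonoidHom.mem_ker] at hx
  set k := ZMod.val (x : ZMod N) with hkdef
  have hkx : ((k : ℕ) : ZMod N) = (x : ZMod N) := by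
    rw [hkdef, ZMod.natCast_val, ZMod.cast_id]
  have hk1 : (k : ℕ) ≡ 1 [MOD Nat.gcd d₁ d₂] := by
    refine (ZMod.natCast_eq_natCast_iff _ _ _).mp ?_
    rw [Nat.cast_one]
    have h5 : ((k : ℕ) : ZMod (Nat.gcd d₁ d₂)) =
        ZMod.castHom hgN (ZMod (Nat.gcd d₁ d₂)) ((x : ZMod N)) := by
      rw [← hkx, map_natCast]
    rw [h5]
    have h6 := congrArg Units.val hx
    simpa [ZMod.unitsMap_def] using h6
  obtain ⟨c, hc1, hc2⟩ := Nat.chineseRemainder' hk1.symm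
  have hcd₁ : ((c : ℕ) : ZMod d₁) = 1 := by
    have := (ZMod.natCast_eq_natCast_iff _ _ _).mpr hc1
    rwa [Nat.cast_one] at this
  have hcd₂ : ((c : ℕ) : ZMod d₂) = ((ZMod.unitsMap hd₂N x : (ZMod d₂)ˣ) : ZMod d₂) := by
    have h8 := (ZMod.natCast_eq_natCast_iff _ _ _).mpr hc2
    rw [h8]
    have h7 : ((k : ℕ) : ZMod d₂) = ZMod.castHom hd₂N (ZMod d₂) ((x : ZMod N)) := by
      rw [← hkx, map_natCast]
    rw [h7]
    simp [ZMod.unitsMap_def]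
  have hcop₁ : Nat.Coprime c d₁ := by
    rw [← ZMod.isUnit_iff_coprime]
    rw [hcd₁]; exact isUnit_one
  have hcop₂ : Nat.Coprime c d₂ := by
    rw [← ZMod.isUnit_iff_coprime]
    rw [hcd₂]; exact Units.isUnit _
  set l := Nat.lcm d₁ d₂ with hldef
  have hlN : l ∣ N := Nat.lcm_dvd hd₁N hd₂N
  haveI : NeZero l := ⟨fun h => (NeZero.ne N) (Nat.eq_zero_of_zero_dvd (h ▸ hlN))⟩
  have hcl : Nat.Coprime c l :=
    (hcop₁.mul_right hcop₂).coprime_dvd_right (Nat.lcm_dvd_mul d₁ d₂)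
  obtain ⟨a, ha⟩ := ZMod.unitsMap_surjective hlN (ZMod.unitOfCoprime c hcl)
  have hd₁l : d₁ ∣ l := Nat.dvd_lcm_left _ _
  have hd₂l : d₂ ∣ l := Nat.dvd_lcm_right _ _
  have hmem₁ : a ∈ (ZMod.unitsMap hd₁N).ker := by
    rw [MonoidHom.mem_ker]
    have hcomp := DFunLike.congr_fun (ZMod.unitsMap_comp hd₁l hlN) a
    rw [MonoidHom.comp_apply, ha] at hcomp
    have : ZMod.unitsMap hd₁N a = ZMod.unitsMap hd₁l (ZMod.unitOfCoprime c hcl) := by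
      rw [← hcomp]
    rw [this]
    ext
    simp [ZMod.unitsMap_def, hcd₁]
  have hmem₂ : a⁻¹ * x ∈ (ZMod.unitsMap hd₂N).ker := by
    rw [MonoidHom.mem_ker, map_mul, map_inv]
    have hcomp := DFunLike.congr_fun (ZMod.unitsMap_comp hd₂l hlN) a
    rw [MonoidHom.comp_apply, ha] at hcomp
    have haval : ZMod.unitsMap hd₂N a = ZMod.unitsMap hd₂N x := by
      rw [← hcomp]
      ext
      simp [ZMod.unitsMap_def, hcd₂]
    rw [haval, inv_mul_cancel]
  rw [MonoidHom.mem_ker]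
  have hx' : x = a * (a⁻¹ * x) := by rw [mul_inv_cancel_left]
  rw [hx', map_mul, h₁ hmem₁, h₂ hmem₂, mul_one]

lemma conductor_dvd_of_factorsThrough {N : ℕ} [NeZero N] (χ : DirichletCharacter ℂ N)
    {M : ℕ} (hM : χ.FactorsThrough M) : χ.conductor ∣ M := by
  have h := factorsThrough_gcd χ (DirichletCharacter.factorsThrough_conductor χ) hM
  have hle : χ.conductor ≤ Nat.gcd χ.conductor M := Nat.sInf_le h
  have hpos : 0 < χ.conductor :=
    Nat.pos_of_ne_zero (DirichletCharacter.conductor_ne_zero χ)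
  have hge : Nat.gcd χ.conductor M ≤ χ.conductor :=
    Nat.le_of_dvd hpos (Nat.gcd_dvd_left _ _)
  have : Nat.gcd χ.conductor M = χ.conductor := le_antisymm hge hle
  exact this ▸ Nat.gcd_dvd_right _ _

end aux

/-- **The identity rewriting Yu's class number formula.** For each prime `p | N` let
`p^{n(p)}` be the exact power of `p` in `N`, let `f_p` be the multiplicative order of the
image of `p` in `(ℤ/(N/p^{n(p)})ℤ)ˣ/±1`, and `e_p = |(ℤ/(N/p^{n(p)})ℤ)ˣ/±1| / f_p`. Then
`∏_χ ∏_{p|N} (1 − p²χ_f(p))/(1 − pχ_f(p)) = ∏_{p|N} (1 + p^{f_p})^{e_p}/(1 + p)`, where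
`χ` ranges over the even non-principal Dirichlet characters modulo `N` and `χ_f` is the
primitive character inducing `χ`. -/
theorem yu_formula_rewriting (N : ℕ) [NeZero N] (hN : 0 < N) :
    ∏ χ ∈ Finset.univ.filter
        (fun χ : DirichletCharacter ℂ N => χ (-1) = 1 ∧ χ ≠ 1),
      ∏ p ∈ N.primeFactors,
        (1 - (p : ℂ) ^ 2 * χ.primitiveCharacter (p : ZMod χ.conductor)) /
          (1 - (p : ℂ) * χ.primitiveCharacter (p : ZMod χ.conductor)) =
      ∏ p ∈ N.primeFactors,
        (1 + (p : ℂ) ^ fP (N / p ^ (N.factorization p)) p) ^ eP (N / p ^ (N.factorization p)) p /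
          (1 + (p : ℂ)) := by
  rw [Finset.prod_comm]
  refine Finset.prod_congr rfl fun p hpmem => ?_
  -- setup
  have hp : p.Prime := Nat.prime_of_mem_primeFactors hpmem
  have hp2 : 2 ≤ p := hp.two_le
  set ν := N.factorization p with hν
  set M := N / p ^ ν with hM2
  have hMN : M ∣ N := Nat.ordCompl_dvd N p
  have hpM : Nat.Coprime p M := Nat.coprime_ordCompl hp (NeZero.ne N)
  haveI : NeZero M := ⟨(Nat.ordCompl_pos p (NeZero.ne N)).ne'⟩
  have hNprod : p ^ ν * M = N := Nat.ordProj_mul_ordCompl_eq_self N p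
  letI : Fintype (DirichletCharacter ℂ M) := Fintype.ofFinite _
  haveI : NeZero (Monoid.exponent (unitsModPM M)) :=
    ⟨Monoid.exponent_ne_zero_of_finite (G := unitsModPM M)⟩
  haveI : Finite (unitsModPM M →* ℂˣ) :=
    Finite.of_equiv (unitsModPM M)
      (CommGroup.monoidHom_mulEquiv_of_hasEnoughRootsOfUnity (unitsModPM M) ℂ).some.toEquiv.symm
  letI : Fintype (unitsModPM M →* ℂˣ) := Fintype.ofFinite _
  letI : Fintype (unitsModPM M) := Fintype.ofFinite _
  set g : unitsModPM M := QuotientGroup.mk (ZMod.unitOfCoprime p hpM) with hg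
  set f := orderOf g with hfdef
  have hfP : fP M p = f := by rw [fP, dif_pos hpM]
  have hePval : eP M p = Fintype.card (unitsModPM M) / f := by
    rw [eP, hfP, Nat.card_eq_fintype_card]
  set e := Fintype.card (unitsModPM M) / f with hedef
  -- nonvanishing facts
  have hf1 : 0 < f := orderOf_pos g
  have hpow_ne : ∀ m : ℕ, m ≠ 0 → (1 : ℂ) - (p : ℂ) ^ m ≠ 0 := by
    intro m hm
    rw [sub_ne_zero]
    intro hcon
    have h9 : ((p ^ m : ℕ) : ℂ) = 1 := by push_cast; exact hcon.symm
    rw [Nat.cast_eq_one] at h9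
    have h1m : 1 < p ^ m := Nat.one_lt_pow hm (by omega)
    omega
  have hP0 : (p : ℂ) ≠ 0 := Nat.cast_ne_zero.mpr hp.pos.ne'
  have hP20 : (p : ℂ) ^ 2 ≠ 0 := pow_ne_zero 2 hP0
  have h1p : (1 : ℂ) - (p : ℂ) ≠ 0 := by simpa using hpow_ne 1 one_ne_zero
  have h1p2 : (1 : ℂ) - (p : ℂ) ^ 2 ≠ 0 := hpow_ne 2 two_ne_zero
  have h1pf : (1 : ℂ) - (p : ℂ) ^ f ≠ 0 := hpow_ne f hf1.ne'
  have h1pP : (1 : ℂ) + (p : ℂ) ≠ 0 := by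
    intro hcon
    have h9 : ((1 + p : ℕ) : ℂ) = 0 := by push_cast; exact hcon
    rw [Nat.cast_eq_zero] at h9
    omega
  -- step 1: restrict to characters whose conductor divides M
  set S := Finset.univ.filter
    (fun χ : DirichletCharacter ℂ N => χ (-1) = 1 ∧ χ ≠ 1) with hS
  set t := fun χ : DirichletCharacter ℂ N =>
    (1 - (p : ℂ) ^ 2 * χ.primitiveCharacter (p : ZMod χ.conductor)) /
      (1 - (p : ℂ) * χ.primitiveCharacter (p : ZMod χ.conductor)) with ht
  have hstep1 : ∏ χ ∈ S, t χ = ∏ χ ∈ S.filter (fun χ => χ.conductor ∣ M), t χ := by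
    refine (Finset.prod_filter_of_ne ?_).symm
    intro χ _ htχ
    by_contra hndvd
    apply htχ
    have hpdvd : p ∣ χ.conductor := by
      by_contra hpc
      apply hndvd
      have hcop : Nat.Coprime (χ.conductor) (p ^ ν) :=
        Nat.Coprime.pow_right ν (Nat.coprime_comm.mp (hp.coprime_iff_not_dvd.mpr hpc))
      have hcd : χ.conductor ∣ p ^ ν * M := by
        rw [hNprod]; exact DirichletCharacter.conductor_dvd_level χ
      exact (Nat.Coprime.dvd_of_dvd_mul_left hcop hcd)
    have hnonunit : ¬ IsUnit ((p : ZMod χ.conductor)) := by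
      haveI : NeZero χ.conductor :=
        ⟨DirichletCharacter.conductor_ne_zero χ⟩
      rw [ZMod.isUnit_iff_coprime]
      intro hcop
      rw [Nat.Prime.coprime_iff_not_dvd hp] at hcop
      exact hcop hpdvd
    rw [ht]
    simp [MulChar.map_nonunit _ hnonunit]
  -- step 2: transfer to level M
  set SM := Finset.univ.filter
    (fun ψ : DirichletCharacter ℂ M => ψ (-1) = 1 ∧ ψ ≠ 1) with hSM
  have hcastp : ∀ (c : ℕ) (hc : c ∣ M) (ψ : DirichletCharacter ℂ c),
      DirichletCharacter.changeLevel hc ψ ((p : ZMod M)) = ψ ((p : ZMod c)) := by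
    intro c hc ψ
    rw [← ZMod.coe_unitOfCoprime p hpM, DirichletCharacter.changeLevel_eq_cast_of_dvd]
    congr 1
    rw [ZMod.coe_unitOfCoprime, ← ZMod.castHom_apply (h := hc), map_natCast]
  have hchangeNeg : ∀ (ψ : DirichletCharacter ℂ M),
      DirichletCharacter.changeLevel hMN ψ (-1) = ψ (-1) := by
    intro ψ
    have hval : ((-1 : (ZMod N)ˣ) : ZMod N) = (-1 : ZMod N) := by
      rw [Units.val_neg, Units.val_one]
    rw [← hval, DirichletCharacter.changeLevel_eq_cast_of_dvd]
    congr 1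
    rw [hval, ← ZMod.castHom_apply (h := hMN), map_neg, map_one]
  have hstep2 : ∏ χ ∈ S.filter (fun χ => χ.conductor ∣ M), t χ =
      ∏ ψ ∈ SM, (1 - (p : ℂ) ^ 2 * ψ ((p : ZMod M))) / (1 - (p : ℂ) * ψ ((p : ZMod M))) := by
    refine (Finset.prod_bij (fun (ψ : DirichletCharacter ℂ M) (_ : ψ ∈ SM) =>
      DirichletCharacter.changeLevel hMN ψ) ?_ ?_ ?_ ?_).symm
    · intro ψ hψ
      rw [hSM, Finset.mem_filter] at hψ
      obtain ⟨-, heven, hne1⟩ := hψ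
      simp only [Finset.mem_filter, Finset.mem_univ, true_and, hS]
      refine ⟨⟨?_, ?_⟩, ?_⟩
      · rw [hchangeNeg ψ, heven]
      · rw [Ne, DirichletCharacter.changeLevel_eq_one_iff]
        exact hne1
      · exact conductor_dvd_of_factorsThrough _ ⟨hMN, ψ, rfl⟩
    · intro ψ₁ _ ψ₂ _ hEq
      exact DirichletCharacter.changeLevel_injective hMN hEq
    · intro χ hχ
      simp only [Finset.mem_filter, Finset.mem_univ, true_and, hS] at hχ
      obtain ⟨⟨heven, hne1⟩, hcM⟩ := hχ
      have hχprim : χ = DirichletCharacter.changeLevel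
          (DirichletCharacter.conductor_dvd_level χ) χ.primitiveCharacter :=
        Classical.choose_spec (DirichletCharacter.factorsThrough_conductor χ).choose_spec
      refine ⟨DirichletCharacter.changeLevel hcM χ.primitiveCharacter, ?_, ?_⟩
      · rw [hSM, Finset.mem_filter]
        have hEq : DirichletCharacter.changeLevel hMN
            (DirichletCharacter.changeLevel hcM χ.primitiveCharacter) = χ := by
          rw [← DirichletCharacter.changeLevel_trans _ hcM hMN]
          exact hχprim.symm
        refine ⟨Finset.mem_univ _, ?_, ?_⟩
        · rw [← hchangeNeg, hEq, heven]
        · intro hcon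
          apply hne1
          rw [← hEq, hcon, map_one]
      · show DirichletCharacter.changeLevel hMN
            (DirichletCharacter.changeLevel hcM χ.primitiveCharacter) = χ
        rw [← DirichletCharacter.changeLevel_trans _ hcM hMN]
        exact hχprim.symm
    · intro ψ hψ
      set χ := DirichletCharacter.changeLevel hMN ψ with hχdef
      have hcM : χ.conductor ∣ M := conductor_dvd_of_factorsThrough _ ⟨hMN, ψ, rfl⟩
      have hχprim : χ = DirichletCharacter.changeLevel
          (DirichletCharacter.conductor_dvd_level χ) χ.primitiveCharacter :=
        Classical.choose_spec (DirichletCharacter.factorsThrough_conductor χ).choose_spec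
      have hψ_eq : ψ = DirichletCharacter.changeLevel hcM χ.primitiveCharacter := by
        refine DirichletCharacter.changeLevel_injective hMN ?_
        rw [← DirichletCharacter.changeLevel_trans _ hcM hMN]
        exact hχprim
      have hval : ψ ((p : ZMod M)) = χ.primitiveCharacter ((p : ZMod χ.conductor)) := by
        rw [hψ_eq, hcastp _ hcM]
      rw [ht]
      simp only [hval]
  -- step 3: evaluate the product over level-M characters
  have hone_mem : (1 : DirichletCharacter ℂ M) ∈
      Finset.univ.filter (fun ψ : DirichletCharacter ℂ M => ψ (-1) = 1) := by
    simp only [Finset.mem_filter, Finset.mem_univ, true_and]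
    rw [show (-1 : ZMod M) = ((-1 : (ZMod M)ˣ) : ZMod M) by rw [Units.val_neg, Units.val_one]]
    exact MulChar.one_apply_coe _
  have hSMerase : SM = (Finset.univ.filter
      (fun ψ : DirichletCharacter ℂ M => ψ (-1) = 1)).erase 1 := by
    ext ψ
    simp only [hSM, Finset.mem_filter, Finset.mem_univ, true_and, Finset.mem_erase]
    tauto
  have hone_val : (1 : DirichletCharacter ℂ M) ((p : ZMod M)) = 1 := by
    rw [← ZMod.coe_unitOfCoprime p hpM]
    exact MulChar.one_apply_coe _
  have key : ∀ x : ℂ, x ≠ 0 → (1 : ℂ) - x ≠ 0 →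
      ∏ ψ ∈ SM, (1 - x * ψ ((p : ZMod M))) = (1 - x ^ f) ^ e / (1 - x) := by
    intro x hx hx1
    have hfull : ∏ ψ ∈ Finset.univ.filter
        (fun ψ : DirichletCharacter ℂ M => ψ (-1) = 1), (1 - x * ψ ((p : ZMod M))) =
        (1 - x ^ f) ^ e := by
      rw [prod_even_chars M p hpM (fun z => 1 - x * z)]
      exact prod_one_sub_mul_monoidHom (unitsModPM M) g x hx
    rw [← Finset.mul_prod_erase _ _ hone_mem, hone_val, mul_one, ← hSMerase] at hfull
    rw [eq_div_iff hx1, mul_comm]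
    exact hfull
  rw [hstep1, hstep2, Finset.prod_div_distrib,
    key ((p : ℂ) ^ 2) hP20 h1p2, key (p : ℂ) hP0 h1p, hfP, hePval]
  -- final algebra
  have hsq : ((p : ℂ) ^ 2) ^ f = ((p : ℂ) ^ f) ^ 2 := by
    rw [← pow_mul, ← pow_mul, mul_comm]
  rw [hsq]
  have hfac1 : (1 : ℂ) - ((p : ℂ) ^ f) ^ 2 = (1 - (p : ℂ) ^ f) * (1 + (p : ℂ) ^ f) := by ring
  have hfac2 : (1 : ℂ) - (p : ℂ) ^ 2 = (1 - (p : ℂ)) * (1 + (p : ℂ)) := by ring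
  rw [hfac1, hfac2, mul_pow]
  field_simp
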